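/- Let f and g be nonzero elements of the free right-symmetric algebra A that commute, i.e., fg = gf. Then g = cf for some scalar c ∈ k. Consequently, the centralizer of any nonzero element f of A equals the one-dimensional subspace kf. -/

import Mathlib

namespace RS

/-- The degree of a nonassociative word. -/
def deg {X : Type*} : FreeMagma X → ℕ
  | .of _ => 1
  | .mul u v => deg u + deg v

/-- The order on nonassociative words: `u < v` if `d u < d v`; words of equal degree 1 are
compared in `X`; words `u = u₁u₂`, `v = v₁v₂` of equal degree `≥ 2` are compared
lexicographically. -/
def wlt {X : Type*} [LinearOrder X] : FreeMagma X → FreeMagma X → Prop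
  | .of a, .of b => a < b
  | .of _, .mul _ _ => True
  | .mul _ _, .of _ => False
  | .mul u₁ u₂, .mul v₁ v₂ =>
      deg (FreeMagma.mul u₁ u₂) < deg (FreeMagma.mul v₁ v₂) ∨
        (deg (FreeMagma.mul u₁ u₂) = deg (FreeMagma.mul v₁ v₂) ∧
          (wlt u₁ v₁ ∨ (u₁ = v₁ ∧ wlt u₂ v₂)))

/-- `u ≤ v` on nonassociative words. -/
def wle {X : Type*} [LinearOrder X] (u v : FreeMagma X) : Prop := wlt u v ∨ u = v

/-- A word is good if it contains no subword `(rs)t` with `s > t`. -/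
def IsGood {X : Type*} [LinearOrder X] : FreeMagma X → Prop
  | .of _ => True
  | .mul (.of _) v => IsGood v
  | .mul (.mul u₁ u₂) v =>
      IsGood (FreeMagma.mul u₁ u₂) ∧ IsGood v ∧ ¬ wlt v u₂

/-- Evaluation of a nonassociative word at values `x` in a magma `A`. -/
def evalWord {X A : Type*} [Mul A] (x : X → A) : FreeMagma X → A
  | .of a => x a
  | .mul u v => evalWord x u * evalWord x v

/-- Data exhibiting a nonunital nonassociative `k`-algebra `A` as the free right-symmetric
algebra `RS⟨x_1,…,x_n⟩`: `A` satisfies the right-symmetric identity and the images of the good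
words form a `k`-linear basis (Segal's theorem). -/
structure FreeRSData (k : Type*) [Field k] (n : ℕ) (A : Type*)
    [NonUnitalNonAssocRing A] [Module k A] where
  rightSymm : ∀ a b c : A, (a * b) * c - a * (b * c) = (a * c) * b - a * (c * b)
  x : Fin n → A
  basis : Module.Basis {w : FreeMagma (Fin n) // IsGood w} k A
  basis_eq : ∀ w : {w : FreeMagma (Fin n) // IsGood w}, basis w = evalWord x w.1

/-- `w` is the leading word of `f`: it is a good word occurring in the representation of `f`
in the basis of good words, and every other good word occurring there is smaller. -/
def IsLeadingWord {k : Type*} [Field k] {n : ℕ} {A : Type*} [NonUnitalNonAssocRing A]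
    [Module k A] (D : FreeRSData k n A) (f : A) (w : FreeMagma (Fin n)) : Prop :=
  ∃ hw : IsGood w,
    (⟨w, hw⟩ : {u : FreeMagma (Fin n) // IsGood u}) ∈ (D.basis.repr f).support ∧
      ∀ u ∈ (D.basis.repr f).support, u.1 ≠ w → wlt u.1 w

/-- The left-normed word `x R_{w_1} ⋯ R_{w_m} = (…((x w_1) w_2) … w_m)`. -/
def leftNormed {X : Type*} (a : FreeMagma X) (l : List (FreeMagma X)) : FreeMagma X :=
  l.foldl FreeMagma.mul a

/-- The degree of a word in the variable `a`. -/
def countVar {X : Type*} [DecidableEq X] (a : X) : FreeMagma X → ℕ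
  | .of b => if b = a then 1 else 0
  | .mul u v => countVar a u + countVar a v

/-- The two-sided ideal of the nonunital nonassociative `k`-algebra `A` generated by `f`. -/
def idealGen (k : Type*) [Field k] {A : Type*} [NonUnitalNonAssocRing A] [Module k A]
    (f : A) : Submodule k A :=
  sInf {I : Submodule k A | f ∈ I ∧ ∀ a : A, ∀ y ∈ I, a * y ∈ I ∧ y * a ∈ I}

/-- A pair of (nonzero) elements `f, g` is reducible if there is a good word `s` in a single
variable with `s(f̄) = ḡ` or `s(ḡ) = f̄`. -/
def Reducible {k : Type*} [Field k] {n : ℕ} {A : Type*} [NonUnitalNonAssocRing A]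
    [Module k A] (D : FreeRSData k n A) (f g : A) : Prop :=
  ∃ wf wg : FreeMagma (Fin n), IsLeadingWord D f wf ∧ IsLeadingWord D g wg ∧
    ∃ s : FreeMagma Unit, IsGood s ∧
      (evalWord (fun _ => wf) s = wg ∨ evalWord (fun _ => wg) s = wf)

/-- An elementary automorphism: it fixes all generators but one, which is sent to
`α x_i + f` with `α ≠ 0` and `f` in the subalgebra generated by the other generators. -/
def IsElementary {k : Type*} [Field k] {n : ℕ} {A : Type*} [NonUnitalNonAssocRing A]
    [Module k A] [SMulCommClass k A A] [IsScalarTower k A A]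
    (D : FreeRSData k n A) (e : A →ₙₐ[k] A) : Prop :=
  Function.Bijective e ∧ ∃ i : Fin n,
    (∀ j : Fin n, j ≠ i → e (D.x j) = D.x j) ∧
    ∃ (α : k) (f : A), α ≠ 0 ∧
      f ∈ NonUnitalAlgebra.adjoin k (D.x '' {j | j ≠ i}) ∧
      e (D.x i) = α • D.x i + f


section Ord
variable {X : Type*} [LinearOrder X]

omit [LinearOrder X] in
@[simp] lemma deg_of (a : X) : deg (FreeMagma.of a) = 1 := rfl
omit [LinearOrder X] in
@[simp] lemma deg_mul (u v : FreeMagma X) : deg (u * v) = deg u + deg v := rfl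

omit [LinearOrder X] in
lemma deg_pos (u : FreeMagma X) : 0 < deg u := by
  induction u with
  | ih1 a => simp
  | ih2 u v hu hv => simp; omega

@[simp] lemma wlt_of_of (a b : X) : wlt (FreeMagma.of a) (FreeMagma.of b) ↔ a < b := Iff.rfl
@[simp] lemma wlt_of_mul (a : X) (u v : FreeMagma X) :
    wlt (FreeMagma.of a) (u * v) := trivial
@[simp] lemma not_wlt_mul_of (a : X) (u v : FreeMagma X) :
    ¬ wlt (u * v) (FreeMagma.of a) := fun h => h

lemma wlt_mul_mul {u₁ u₂ v₁ v₂ : FreeMagma X} :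
    wlt (u₁ * u₂) (v₁ * v₂) ↔
      deg (u₁ * u₂) < deg (v₁ * v₂) ∨
        (deg (u₁ * u₂) = deg (v₁ * v₂) ∧ (wlt u₁ v₁ ∨ (u₁ = v₁ ∧ wlt u₂ v₂))) := Iff.rfl

lemma deg_le_of_wlt : ∀ {u v : FreeMagma X}, wlt u v → deg u ≤ deg v := by
  intro u v h
  match u, v with
  | .of a, .of b => simp
  | .of a, .mul v₁ v₂ =>
      have := deg_pos v₁; have := deg_pos v₂
      show 1 ≤ deg (v₁ * v₂); simp; omega
  | .mul u₁ u₂, .of _ => exact absurd h (not_wlt_mul_of _ _ _)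
  | .mul u₁ u₂, .mul v₁ v₂ =>
      simp only [FreeMagma.mul_eq] at h ⊢
      rcases (wlt_mul_mul.1 h) with h | ⟨h, _⟩ <;> omega

lemma wlt_of_deg_lt : ∀ {u v : FreeMagma X}, deg u < deg v → wlt u v := by
  intro u v h
  match u, v with
  | .of a, .of b => simp at h
  | .of a, .mul v₁ v₂ => exact wlt_of_mul _ _ _
  | .mul u₁ u₂, .of b =>
      have := deg_pos u₁; have := deg_pos u₂
      exact absurd h (by show ¬ deg (u₁ * u₂) < 1; simp; omega)
  | .mul u₁ u₂, .mul v₁ v₂ => exact wlt_mul_mul.2 (Or.inl h)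

lemma wlt_irrefl : ∀ u : FreeMagma X, ¬ wlt u u := by
  intro u
  induction u with
  | ih1 a => simp
  | ih2 u v hu hv =>
      rw [wlt_mul_mul]
      rintro (h | ⟨-, h | ⟨-, h⟩⟩)
      · omega
      · exact hu h
      · exact hv h

lemma wlt_trans : ∀ u v w : FreeMagma X, wlt u v → wlt v w → wlt u w := by
  intro u
  induction u with
  | ih1 a =>
      intro v w huv hvw
      match v, w with
      | .of b, .of c => exact lt_trans huv hvw
      | .of b, .mul _ _ => exact wlt_of_mul _ _ _
      | .mul p q, .of c => exact absurd hvw (not_wlt_mul_of _ _ _)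
      | .mul _ _, .mul _ _ => exact wlt_of_mul _ _ _
  | ih2 u₁ u₂ ih₁ ih₂ =>
      intro v w huv hvw
      match v, w with
      | .of b, _ => exact absurd huv (not_wlt_mul_of _ _ _)
      | .mul v₁ v₂, .of c => exact absurd hvw (not_wlt_mul_of _ _ _)
      | .mul v₁ v₂, .mul w₁ w₂ =>
          simp only [FreeMagma.mul_eq] at huv hvw ⊢
          rw [wlt_mul_mul] at huv hvw ⊢
          rcases huv with h | ⟨hd, h⟩
          · rcases hvw with h' | ⟨hd', _⟩
            · exact Or.inl (by omega)
            · exact Or.inl (by omega)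
          · rcases hvw with h' | ⟨hd', h'⟩
            · exact Or.inl (by omega)
            · refine Or.inr ⟨by omega, ?_⟩
              rcases h with h | ⟨rfl, h⟩
              · rcases h' with h' | ⟨rfl, h'⟩
                · exact Or.inl (ih₁ _ _ h h')
                · exact Or.inl h
              · rcases h' with h' | ⟨rfl, h'⟩
                · exact Or.inl h'
                · exact Or.inr ⟨rfl, ih₂ _ _ h h'⟩

lemma wlt_trichotomy : ∀ u v : FreeMagma X, wlt u v ∨ u = v ∨ wlt v u := by
  intro u
  induction u with
  | ih1 a =>
      intro v
      match v with
      | .of b =>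
          rcases lt_trichotomy a b with h | h | h
          · exact Or.inl h
          · exact Or.inr (Or.inl (by rw [h]))
          · exact Or.inr (Or.inr h)
      | .mul _ _ => exact Or.inl (wlt_of_mul _ _ _)
  | ih2 u₁ u₂ ih₁ ih₂ =>
      intro v
      match v with
      | .of b => exact Or.inr (Or.inr (wlt_of_mul _ _ _))
      | .mul v₁ v₂ =>
          simp only [FreeMagma.mul_eq]
          rcases Nat.lt_trichotomy (deg (u₁ * u₂)) (deg (v₁ * v₂)) with hd | hd | hd
          · exact Or.inl (wlt_mul_mul.2 (Or.inl hd))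
          · rcases ih₁ v₁ with h | rfl | h
            · exact Or.inl (wlt_mul_mul.2 (Or.inr ⟨hd, Or.inl h⟩))
            · rcases ih₂ v₂ with h | rfl | h
              · exact Or.inl (wlt_mul_mul.2 (Or.inr ⟨hd, Or.inr ⟨rfl, h⟩⟩))
              · exact Or.inr (Or.inl rfl)
              · exact Or.inr (Or.inr (wlt_mul_mul.2 (Or.inr ⟨hd.symm, Or.inr ⟨rfl, h⟩⟩)))
            · exact Or.inr (Or.inr (wlt_mul_mul.2 (Or.inr ⟨hd.symm, Or.inl h⟩)))
          · exact Or.inr (Or.inr (wlt_mul_mul.2 (Or.inl hd)))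

lemma wlt_asymm {u v : FreeMagma X} (h : wlt u v) : ¬ wlt v u :=
  fun h' => wlt_irrefl u (wlt_trans u v u h h')

lemma wle_refl (u : FreeMagma X) : wle u u := Or.inr rfl

lemma wle_of_wlt {u v : FreeMagma X} (h : wlt u v) : wle u v := Or.inl h

lemma wlt_of_wle_of_wlt {u v w : FreeMagma X} (h : wle u v) (h' : wlt v w) : wlt u w := by
  rcases h with h | rfl
  · exact wlt_trans _ _ _ h h'
  · exact h'

lemma wlt_of_wlt_of_wle {u v w : FreeMagma X} (h : wlt u v) (h' : wle v w) : wlt u w := by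
  rcases h' with h' | rfl
  · exact wlt_trans _ _ _ h h'
  · exact h

lemma wle_trans {u v w : FreeMagma X} (h : wle u v) (h' : wle v w) : wle u w := by
  rcases h' with h' | rfl
  · exact Or.inl (wlt_of_wle_of_wlt h h')
  · exact h

lemma wle_antisymm {u v : FreeMagma X} (h : wle u v) (h' : wle v u) : u = v := by
  rcases h with h | rfl
  · rcases h' with h' | rfl
    · exact absurd h' (wlt_asymm h)
    · rfl
  · rfl

lemma wle_of_not_wlt {u v : FreeMagma X} (h : ¬ wlt u v) : wle v u := by
  rcases wlt_trichotomy u v with h' | rfl | h'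
  · exact absurd h' h
  · exact wle_refl _
  · exact Or.inl h'

lemma not_wlt_of_wle {u v : FreeMagma X} (h : wle u v) : ¬ wlt v u := by
  rcases h with h | rfl
  · exact wlt_asymm h
  · exact wlt_irrefl _

lemma deg_le_of_wle {u v : FreeMagma X} (h : wle u v) : deg u ≤ deg v := by
  rcases h with h | rfl
  · exact deg_le_of_wlt h
  · exact le_refl _

lemma wlt_of_deg_left {u₁ u₂ v₁ v₂ : FreeMagma X} (hdeg : deg (u₁ * u₂) = deg (v₁ * v₂))
    (h : wlt u₁ v₁) : wlt (u₁ * u₂) (v₁ * v₂) := wlt_mul_mul.2 (Or.inr ⟨hdeg, Or.inl h⟩)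

lemma wlt_of_deg_right {u₁ u₂ v₂ : FreeMagma X} (hdeg : deg u₂ = deg v₂)
    (h : wlt u₂ v₂) : wlt (u₁ * u₂) (u₁ * v₂) :=
  wlt_mul_mul.2 (Or.inr ⟨by simp [hdeg], Or.inr ⟨rfl, h⟩⟩)

lemma wle_mul_mul_of_wle {u₁ u₂ v₁ v₂ : FreeMagma X} (hdeg : deg (u₁ * u₂) = deg (v₁ * v₂))
    (h₁ : wle u₁ v₁) (h₂ : wle u₂ v₂) : wle (u₁ * u₂) (v₁ * v₂) := by
  rcases h₁ with h₁ | rfl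
  · exact Or.inl (wlt_of_deg_left hdeg h₁)
  · rcases h₂ with h₂ | rfl
    · exact Or.inl (wlt_mul_mul.2 (Or.inr ⟨hdeg, Or.inr ⟨rfl, h₂⟩⟩))
    · exact wle_refl _

lemma wlt_mul_mul_of_ne {u₁ u₂ v₁ v₂ : FreeMagma X} (hdeg : deg (u₁ * u₂) = deg (v₁ * v₂))
    (h₁ : wle u₁ v₁) (h₂ : wle u₂ v₂) (hne : u₁ ≠ v₁ ∨ u₂ ≠ v₂) :
    wlt (u₁ * u₂) (v₁ * v₂) := by
  rcases h₁ with h₁ | rfl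
  · exact wlt_of_deg_left hdeg h₁
  · rcases h₂ with h₂ | rfl
    · exact wlt_mul_mul.2 (Or.inr ⟨hdeg, Or.inr ⟨rfl, h₂⟩⟩)
    · rcases hne with h | h <;> exact absurd rfl h

instance decWlt : ∀ u v : FreeMagma X, Decidable (wlt u v)
  | .of a, .of b => inferInstanceAs (Decidable (a < b))
  | .of _, .mul _ _ => isTrue trivial
  | .mul _ _, .of _ => isFalse (fun h => h)
  | .mul u₁ u₂, .mul v₁ v₂ =>
      have := decWlt u₁ v₁
      have := decWlt u₂ v₂
      inferInstanceAs (Decidable (_ ∨ _))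

end Ord

section Circ
variable {X : Type*} [LinearOrder X]

@[simp] lemma isGood_of (a : X) : IsGood (FreeMagma.of a) := trivial
@[simp] lemma isGood_of_mul (a : X) (v : FreeMagma X) :
    IsGood (FreeMagma.of a * v) ↔ IsGood v := Iff.rfl
@[simp] lemma isGood_mul_mul (u₁ u₂ v : FreeMagma X) :
    IsGood ((u₁ * u₂) * v) ↔ IsGood (u₁ * u₂) ∧ IsGood v ∧ ¬ wlt v u₂ := Iff.rfl

lemma IsGood.left : ∀ {u v : FreeMagma X}, IsGood (u * v) → IsGood u := by
  intro u v h
  match u with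
  | .of a => exact trivial
  | .mul u₁ u₂ => exact h.1

lemma IsGood.right : ∀ {u v : FreeMagma X}, IsGood (u * v) → IsGood v := by
  intro u v h
  match u with
  | .of a => exact h
  | .mul u₁ u₂ => exact h.2.1

/-- The leading good word of the product of two good words. -/
def circ : FreeMagma X → FreeMagma X → FreeMagma X
  | .of a, v => FreeMagma.of a * v
  | .mul u₁ u₂, v => if wlt v u₂ then circ u₁ v * u₂ else (u₁ * u₂) * v

@[simp] lemma circ_of (a : X) (v : FreeMagma X) : circ (FreeMagma.of a) v = FreeMagma.of a * v := rfl

lemma circ_mul_pos {u₁ u₂ v : FreeMagma X} (h : wlt v u₂) :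
    circ (u₁ * u₂) v = circ u₁ v * u₂ := if_pos h

lemma circ_mul_neg {u₁ u₂ v : FreeMagma X} (h : ¬ wlt v u₂) :
    circ (u₁ * u₂) v = (u₁ * u₂) * v := if_neg h

@[simp] lemma deg_circ : ∀ u v : FreeMagma X, deg (circ u v) = deg u + deg v := by
  intro u
  induction u with
  | ih1 a => intro v; simp
  | ih2 u₁ u₂ ih₁ ih₂ =>
      intro v
      by_cases h : wlt v u₂
      · rw [circ_mul_pos h]; simp [ih₁]; omega
      · rw [circ_mul_neg h]; simp

lemma circ_spec : ∀ u v : FreeMagma X, IsGood u → IsGood v →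
    IsGood (circ u v) ∧ ∃ p q, circ u v = p * q ∧ (q = v ∨ ∃ r, u = r * q) := by
  intro u
  induction u with
  | ih1 a =>
      intro v hu hv
      exact ⟨hv, FreeMagma.of a, v, rfl, Or.inl rfl⟩
  | ih2 u₁ u₂ ih₁ ih₂ =>
      intro v hu hv
      by_cases h : wlt v u₂
      · rw [circ_mul_pos h]
        obtain ⟨hg, p, q, hpq, hq⟩ := ih₁ v hu.left hv
        have hrc : ¬ wlt u₂ q := by
          rcases hq with rfl | ⟨r, hr⟩
          · exact wlt_asymm h
          · rw [hr] at hu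
            exact hu.2.2
        constructor
        · rw [hpq]
          exact (isGood_mul_mul p q u₂).2 ⟨hpq ▸ hg, hu.right, hrc⟩
        · exact ⟨circ u₁ v, u₂, rfl, Or.inr ⟨u₁, rfl⟩⟩
      · rw [circ_mul_neg h]; simp
        exact ⟨(isGood_mul_mul u₁ u₂ v).2 ⟨hu, hv, h⟩, u₁ * u₂, v, rfl, Or.inl rfl⟩

lemma isGood_circ {u v : FreeMagma X} (hu : IsGood u) (hv : IsGood v) :
    IsGood (circ u v) := (circ_spec u v hu hv).1

lemma circ_eq_of_isGood_mul : ∀ {u v : FreeMagma X}, IsGood (u * v) → circ u v = u * v := by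
  intro u v h
  match u with
  | .of a => rfl
  | .mul u₁ u₂ => exact circ_mul_neg h.2.2

lemma wle_circ : ∀ u v : FreeMagma X, wle (circ u v) (u * v) := by
  intro u
  induction u with
  | ih1 a => intro v; exact wle_refl _
  | ih2 u₁ u₂ ih₁ ih₂ =>
      intro v
      by_cases h : wlt v u₂
      · rw [circ_mul_pos h]
        have hdv : deg v ≤ deg u₂ := deg_le_of_wlt h
        have hdtot : deg (circ u₁ v * u₂) = deg ((u₁ * u₂) * v) := by simp; omega
        rcases Nat.lt_or_ge (deg v) (deg u₂) with hlt | hge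
        · exact Or.inl (wlt_of_deg_left hdtot (wlt_of_deg_lt (by simp; omega)))
        · have hdeq : deg v = deg u₂ := le_antisymm hdv hge
          have h1 : wle (circ u₁ v) (u₁ * v) := ih₁ v
          have h2 : wlt (u₁ * v) (u₁ * u₂) := wlt_of_deg_right hdeq h
          exact Or.inl (wlt_of_deg_left hdtot (wlt_of_wle_of_wlt h1 h2))
      · rw [circ_mul_neg h]; exact wle_refl _

end Circ

section Mono
variable {X : Type*} [LinearOrder X]

lemma circ_mono : ∀ (N : ℕ) (u v u' v' : FreeMagma X), deg u + deg v ≤ N →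
    IsGood u → IsGood v → IsGood u' → IsGood v' →
    wle u' u → wle v' v → (u' ≠ u ∨ v' ≠ v) → wlt (circ u' v') (circ u v) := by
  intro N
  induction N using Nat.strong_induction_on with
  | _ N IH =>
  intro u v u' v' hN hu hv hu' hv' hle_u hle_v hne
  have hdu' : deg u' ≤ deg u := deg_le_of_wle hle_u
  have hdv' : deg v' ≤ deg v := deg_le_of_wle hle_v
  rcases Nat.lt_or_ge (deg u' + deg v') (deg u + deg v) with hlt | hge
  · exact wlt_of_deg_lt (by rw [deg_circ, deg_circ]; omega)
  have hdu : deg u' = deg u := by omega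
  have hdv : deg v' = deg v := by omega
  cases u with
  | of a =>
      cases u' with
      | of a' =>
          rw [circ_of, circ_of]
          exact wlt_mul_mul_of_ne (by simp; omega) hle_u hle_v
            (by rcases hne with h | h
                · exact Or.inl (fun he => h (by rw [he]))
                · exact Or.inr h)
      | mul p q =>
          exfalso; have := deg_pos p; have := deg_pos q
          simp only [FreeMagma.mul_eq, deg_of, deg_mul] at hdu; omega
  | mul u₁ u₂ =>
      cases u' with
      | of a' =>
          exfalso; have := deg_pos u₁; have := deg_pos u₂
          simp only [FreeMagma.mul_eq, deg_of, deg_mul] at hdu; omega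
      | mul u₁' u₂' =>
          simp only [FreeMagma.mul_eq] at hN hu hu' hle_u hne hdu' hge hdu ⊢
          have hcomp : wlt u₁' u₁ ∨ (u₁' = u₁ ∧ wle u₂' u₂) := by
            rcases hle_u with h | heq
            · rcases wlt_mul_mul.1 h with hd | ⟨-, h⟩
              · exact absurd hd (by omega)
              · rcases h with h | ⟨he, h⟩
                · exact Or.inl h
                · exact Or.inr ⟨he, wle_of_wlt h⟩
            · have heq' : FreeMagma.mul u₁' u₂' = FreeMagma.mul u₁ u₂ := heq
              injection heq' with h1 h2
              exact Or.inr ⟨h1, Or.inr h2⟩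
          have hle1 : wle u₁' u₁ := by
            rcases hcomp with h | ⟨h, -⟩
            · exact wle_of_wlt h
            · exact Or.inr h
          have hd12 : deg u₁' ≤ deg u₁ := deg_le_of_wle hle1
          by_cases hb : wlt v u₂
      -- u is in the "bad" case: circ u v = circ u₁ v * u₂
          · rw [circ_mul_pos hb]
            by_cases hb' : wlt v' u₂'
            · rw [circ_mul_pos hb']
              have hdtot' : deg (circ u₁' v' * u₂') = deg (circ u₁ v * u₂) := by
                simp only [deg_mul, deg_circ]
                simp only [deg_mul] at hdu; omega
              rcases Nat.lt_or_ge (deg u₁' + deg v') (deg u₁ + deg v) with hl | hg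
              · exact wlt_of_deg_left hdtot' (wlt_of_deg_lt (by rw [deg_circ, deg_circ]; omega))
              · have hdd : deg u₁' = deg u₁ := by omega
                by_cases hcase : u₁' = u₁ ∧ v' = v
                · obtain ⟨h1, h2⟩ := hcase
                  subst h1; subst h2
                  have hne2 : u₂' ≠ u₂ := by
                    rcases hne with h | h
                    · exact fun he => h (by rw [he])
                    · exact absurd rfl h
                  have hlt2 : wlt u₂' u₂ := by
                    rcases hcomp with h | ⟨-, h⟩
                    · exact absurd h (wlt_irrefl _)
                    · rcases h with h | h
                      · exact h
                      · exact absurd h hne2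
                  exact wlt_mul_mul.2 (Or.inr ⟨hdtot', Or.inr ⟨rfl, hlt2⟩⟩)
                · have hne3 : u₁' ≠ u₁ ∨ v' ≠ v := by
                    by_cases h1 : u₁' = u₁
                    · exact Or.inr (fun h2 => hcase ⟨h1, h2⟩)
                    · exact Or.inl h1
                  have hrec : wlt (circ u₁' v') (circ u₁ v) := by
                    refine IH (deg u₁ + deg v) ?_ u₁ v u₁' v' le_rfl hu.left hv hu'.left hv'
                      hle1 hle_v hne3
                    have := deg_pos u₂
                    simp only [deg_mul] at hN; omega
                  exact wlt_of_deg_left hdtot' hrec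
            · rw [circ_mul_neg hb']
              have hdtot' : deg ((u₁' * u₂') * v') = deg (circ u₁ v * u₂) := by
                simp only [deg_mul, deg_circ]
                simp only [deg_mul] at hdu; omega
              have h2v' : wle u₂' v' := wle_of_not_wlt hb'
              have e1 : deg u₂' ≤ deg v' := deg_le_of_wle h2v'
              have e2 : deg v ≤ deg u₂ := deg_le_of_wlt hb
              have hd1 : deg u₁' = deg u₁ := by
                simp only [deg_mul] at hdu; omega
              have hd2 : deg u₂' = deg u₂ := by
                simp only [deg_mul] at hdu; omega
              have hdveq : deg v = deg u₂ := by omega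
              have hkey : wle (u₁' * u₂') (circ u₁ v) := by
                cases u₁ with
                | of b =>
                    cases u₁' with
                    | of b' =>
                        rw [circ_of]
                        exact wle_mul_mul_of_wle (by simp; omega) hle1 (wle_trans h2v' hle_v)
                    | mul p q =>
                        exfalso; have := deg_pos p; have := deg_pos q
                        simp only [FreeMagma.mul_eq, deg_of, deg_mul] at hd1; omega
                | mul u₁₁ u₁₂ =>
                    simp only [FreeMagma.mul_eq] at *
                    cases u₁' with
                    | of b' =>
                        exfalso; have := deg_pos u₁₁; have := deg_pos u₁₂
                        simp only [FreeMagma.mul_eq, deg_of, deg_mul] at hd1; omega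
                    | mul p q =>
                        simp only [FreeMagma.mul_eq] at *
                        by_cases hbb : wlt v u₁₂
                        · rw [circ_mul_pos hbb]
                          have hq : wle q u₂' := wle_of_not_wlt hu'.2.2
                          have hqv' : wle q v' := wle_trans hq h2v'
                          have hne4 : (p * q : FreeMagma X) ≠ u₁₁ * u₁₂ := by
                            intro he
                            have he' : FreeMagma.mul p q = FreeMagma.mul u₁₁ u₁₂ := he
                            injection he' with hp hqq
                            subst hqq
                            exact wlt_irrefl v
                              (wlt_of_wlt_of_wle hbb (wle_trans hqv' hle_v))
                          have hrec : wlt (circ (p * q) v') (circ (u₁₁ * u₁₂) v) := by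
                            refine IH (deg (u₁₁ * u₁₂) + deg v) ?_ _ v _ v' le_rfl hu.left hv
                              hu'.left hv' hle1 hle_v (Or.inl hne4)
                            have := deg_pos u₂
                            simp only [deg_mul] at hN ⊢; omega
                          rw [circ_mul_neg (not_wlt_of_wle hqv'), circ_mul_pos hbb] at hrec
                          -- hrec : wlt ((p*q)*v') (circ u₁₁ v * u₁₂)
                          have hdeq2 : deg ((p * q) * u₂') = deg (circ u₁₁ v * u₁₂) := by
                            simp only [deg_mul, deg_circ]
                            simp only [deg_mul] at hd1 ⊢
                            have h5 : deg v ≤ deg u₁₂ := deg_le_of_wlt hbb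
                            omega
                          rcases wlt_mul_mul.1 hrec with hd | ⟨hdeq', hcc⟩
                          · exfalso
                            simp only [deg_mul, deg_circ] at hd
                            simp only [deg_mul] at hd1
                            omega
                          · rcases hcc with hl | ⟨heq, hr⟩
                            · exact Or.inl (wlt_of_deg_left hdeq2 hl)
                            · refine Or.inl (wlt_mul_mul.2 (Or.inr ⟨hdeq2, Or.inr ⟨heq, ?_⟩⟩))
                              exact wlt_of_wle_of_wlt h2v' hr
                        · rw [circ_mul_neg hbb]
                          exact wle_mul_mul_of_wle
                            (by simp only [deg_mul] at hd1 hd2 hdveq ⊢; omega) hle1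
                            (wle_trans h2v' hle_v)
              rcases hkey with hk | hk
              · exact wlt_of_deg_left hdtot' hk
              · rw [hk]
                exact wlt_of_deg_right (by omega) (wlt_of_wle_of_wlt hle_v hb)
      -- u is in the "good" case: circ u v = (u₁*u₂)*v
          · rw [circ_mul_neg hb]
            by_cases hb' : wlt v' u₂'
            · rw [circ_mul_pos hb']
              have hdtot' : deg (circ u₁' v' * u₂') = deg ((u₁ * u₂) * v) := by
                simp only [deg_mul, deg_circ]
                simp only [deg_mul] at hdu; omega
              have hdv2' : deg v' ≤ deg u₂' := deg_le_of_wlt hb'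
              have hL : wlt (circ u₁' v') (u₁ * u₂) := by
                rcases Nat.lt_or_ge (deg u₁' + deg v') (deg (u₁ * u₂)) with hl | hg
                · exact wlt_of_deg_lt (by rw [deg_circ]; omega)
                · have hdveq : deg v' = deg u₂' := by
                    simp only [deg_mul] at hg hdu; omega
                  have c1 : wle (circ u₁' v') (u₁' * v') := wle_circ _ _
                  have c2 : wlt (u₁' * v') (u₁' * u₂') := wlt_of_deg_right hdveq hb'
                  exact wlt_of_wle_of_wlt c1 (wlt_of_wlt_of_wle c2 hle_u)
              exact wlt_of_deg_left hdtot' hL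
            · rw [circ_mul_neg hb']
              exact wlt_mul_mul_of_ne (by simp only [deg_mul] at hdu ⊢; omega) hle_u hle_v hne
end Mono

section CommWF
variable {X : Type*} [LinearOrder X]

lemma eq_of_circ_comm : ∀ u v : FreeMagma X, IsGood u → IsGood v →
    circ u v = circ v u → u = v := by
  intro u v hu hv h
  cases u with
  | of a =>
      cases v with
      | of b =>
          rw [circ_of, circ_of] at h
          have h' : FreeMagma.mul (FreeMagma.of a) (FreeMagma.of b)
              = FreeMagma.mul (FreeMagma.of b) (FreeMagma.of a) := h
          injection h' with h1 h2
      | mul v₁ v₂ =>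
          exfalso
          simp only [FreeMagma.mul_eq] at h
          rw [circ_of] at h
          by_cases hb : wlt (FreeMagma.of a) v₂
          · rw [circ_mul_pos hb] at h
            have h' : FreeMagma.mul (FreeMagma.of a) (v₁ * v₂)
                = FreeMagma.mul (circ v₁ (FreeMagma.of a)) v₂ := h
            injection h' with h1 h2
            have hdg := congrArg deg h1
            have := deg_pos v₁
            simp only [deg_of, deg_circ] at hdg
            omega
          · rw [circ_mul_neg hb] at h
            have h' : FreeMagma.mul (FreeMagma.of a) (v₁ * v₂)
                = FreeMagma.mul (v₁ * v₂) (FreeMagma.of a) := h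
            injection h' with h1 h2
            have hdg := congrArg deg h1
            have := deg_pos v₁; have := deg_pos v₂
            simp only [deg_of, deg_mul] at hdg
            omega
  | mul u₁ u₂ =>
      cases v with
      | of b =>
          exfalso
          simp only [FreeMagma.mul_eq] at h
          rw [circ_of] at h
          by_cases hb : wlt (FreeMagma.of b) u₂
          · rw [circ_mul_pos hb] at h
            have h' : FreeMagma.mul (circ u₁ (FreeMagma.of b)) u₂
                = FreeMagma.mul (FreeMagma.of b) (u₁ * u₂) := h
            injection h' with h1 h2
            have hdg := congrArg deg h1
            have := deg_pos u₁
            simp only [deg_of, deg_circ] at hdg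
            omega
          · rw [circ_mul_neg hb] at h
            have h' : FreeMagma.mul (u₁ * u₂) (FreeMagma.of b)
                = FreeMagma.mul (FreeMagma.of b) (u₁ * u₂) := h
            injection h' with h1 h2
            have hdg := congrArg deg h1
            have := deg_pos u₁; have := deg_pos u₂
            simp only [deg_of, deg_mul] at hdg
            omega
      | mul v₁ v₂ =>
      simp only [FreeMagma.mul_eq] at h ⊢
      by_cases hb1 : wlt (v₁ * v₂) u₂
      · rw [circ_mul_pos hb1] at h
        by_cases hb2 : wlt (u₁ * u₂) v₂
        · -- both bad: contradiction
          exfalso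
          rw [circ_mul_pos hb2] at h
          have h' : FreeMagma.mul (circ u₁ (v₁ * v₂)) u₂
              = FreeMagma.mul (circ v₁ (u₁ * u₂)) v₂ := h
          injection h' with h1 h2
          subst h2
          have hd := deg_le_of_wlt hb2
          have := deg_pos u₁
          simp only [deg_mul] at hd
          omega
        · exfalso
          rw [circ_mul_neg hb2] at h
          have h' : FreeMagma.mul (circ u₁ (v₁ * v₂)) u₂
              = FreeMagma.mul (v₁ * v₂) (u₁ * u₂) := h
          injection h' with h1 h2
          have hdg := congrArg deg h2
          have := deg_pos u₁
          simp only [deg_mul] at hdg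
          omega
      · rw [circ_mul_neg hb1] at h
        by_cases hb2 : wlt (u₁ * u₂) v₂
        · exfalso
          rw [circ_mul_pos hb2] at h
          have h' : FreeMagma.mul (u₁ * u₂) (v₁ * v₂)
              = FreeMagma.mul (circ v₁ (u₁ * u₂)) v₂ := h
          injection h' with h1 h2
          have hdg := congrArg deg h2
          have := deg_pos v₁
          simp only [deg_mul] at hdg
          omega
        · rw [circ_mul_neg hb2] at h
          have h' : FreeMagma.mul (u₁ * u₂) (v₁ * v₂)
              = FreeMagma.mul (v₁ * v₂) (u₁ * u₂) := h
          injection h' with h1 h2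

noncomputable instance : LinearOrder (FreeMagma X) where
  le := wle
  lt := wlt
  le_refl := wle_refl
  le_trans := fun _ _ _ => wle_trans
  le_antisymm := fun _ _ => wle_antisymm
  le_total := fun a b => by
    rcases wlt_trichotomy a b with h | rfl | h
    · exact Or.inl (wle_of_wlt h)
    · exact Or.inl (wle_refl _)
    · exact Or.inr (wle_of_wlt h)
  lt_iff_le_not_ge := fun a b => by
    constructor
    · intro h
      exact ⟨wle_of_wlt h, fun h' => not_wlt_of_wle h' h⟩
    · rintro ⟨h, h'⟩
      rcases h with h | rfl
      · exact h
      · exact absurd (wle_refl a) h'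
  toDecidableLE := fun a b => decidable_of_iff (wlt a b ∨ a = b) Iff.rfl
  toDecidableEq := fun a b => inferInstanceAs (Decidable (a = b))
  toDecidableLT := fun a b => inferInstanceAs (Decidable (wlt a b))

lemma lt_iff_wlt {u v : FreeMagma X} : u < v ↔ wlt u v := Iff.rfl
lemma le_iff_wle {u v : FreeMagma X} : u ≤ v ↔ wle u v := Iff.rfl

lemma finite_deg_le [Finite X] (d : ℕ) : {w : FreeMagma X | deg w ≤ d}.Finite := by
  induction d with
  | zero =>
      convert Set.finite_empty
      ext w
      simpa using Nat.not_le_of_gt (deg_pos w)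
  | succ d ih =>
      have hsub : {w : FreeMagma X | deg w ≤ d + 1} ⊆
          Set.range (FreeMagma.of : X → FreeMagma X) ∪
            Set.image2 (· * ·) {w : FreeMagma X | deg w ≤ d} {w : FreeMagma X | deg w ≤ d} := by
        intro w hw
        cases w with
        | of a => exact Or.inl ⟨a, rfl⟩
        | mul p q =>
            refine Or.inr ⟨p, ?_, q, ?_, rfl⟩
            · have := deg_pos q
              have hw' : deg (p * q) ≤ d + 1 := hw
              simp only [deg_mul] at hw'
              simpa using by omega
            · have := deg_pos p
              have hw' : deg (p * q) ≤ d + 1 := hw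
              simp only [deg_mul] at hw'
              simpa using by omega
      exact Set.Finite.subset ((Set.finite_range _).union (Set.Finite.image2 _ ih ih)) hsub

lemma wlt_wf [Finite X] : WellFounded (wlt : FreeMagma X → FreeMagma X → Prop) := by
  constructor
  intro w
  have key : ∀ d : ℕ, ∀ w : FreeMagma X, deg w ≤ d → Acc wlt w := by
    intro d
    have hfin : {w : FreeMagma X | deg w ≤ d}.Finite := finite_deg_le d
    have hwf : {w : FreeMagma X | deg w ≤ d}.WellFoundedOn (· < ·) :=
      hfin.wellFoundedOn
    intro w hw
    have : ∀ p : {w : FreeMagma X | deg w ≤ d}, Acc wlt p.1 := by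
      intro p
      refine WellFounded.induction hwf (C := fun p => Acc wlt p.1) p ?_
      intro q IH
      constructor
      intro z hz
      exact IH ⟨z, le_trans (deg_le_of_wlt hz) q.2⟩ hz
    exact this ⟨w, hw⟩
  exact key (deg w) w le_rfl

end CommWF

section Algebra

variable {k : Type*} [Field k] {n : ℕ} {A : Type*} [NonUnitalNonAssocRing A]
  [Module k A] [SMulCommClass k A A] [IsScalarTower k A A] (D : FreeRSData k n A)

@[simp] lemma evalWord_mul {xv : Fin n → A} (u v : FreeMagma (Fin n)) :
    evalWord xv (u * v) = evalWord xv u * evalWord xv v := rfl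

/-- The span of the good words strictly below `w`. -/
def below (w : FreeMagma (Fin n)) : Submodule k A :=
  Submodule.span k (⇑D.basis '' {z : {w : FreeMagma (Fin n) // IsGood w} | wlt z.1 w})

lemma below_mono {w w' : FreeMagma (Fin n)} (h : wle w w') : below D w ≤ below D w' :=
  Submodule.span_mono (Set.image_mono (fun z hz => wlt_of_wlt_of_wle hz h))

lemma basis_mem_below {z : {w : FreeMagma (Fin n) // IsGood w}} {w : FreeMagma (Fin n)}
    (h : wlt z.1 w) : D.basis z ∈ below D w :=
  Submodule.subset_span ⟨z, h, rfl⟩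

lemma eval_mem_below {z w : FreeMagma (Fin n)} (hz : IsGood z) (h : wlt z w) :
    evalWord D.x z ∈ below D w := by
  rw [← D.basis_eq ⟨z, hz⟩]
  exact basis_mem_below D h

/-- The fundamental multiplication lemma: the product of two good words is the
good word `circ u v` plus lower-order terms. -/
lemma key : ∀ u v : FreeMagma (Fin n), IsGood u → IsGood v →
    evalWord D.x u * evalWord D.x v - evalWord D.x (circ u v) ∈ below D (circ u v) := by
  suffices H : ∀ m : FreeMagma (Fin n), ∀ u v, u * v = m → IsGood u → IsGood v →
      evalWord D.x u * evalWord D.x v - evalWord D.x (circ u v) ∈ below D (circ u v) by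
    intro u v hu hv
    exact H (u * v) u v rfl hu hv
  intro m
  induction m using (wlt_wf (X := Fin n)).induction with
  | _ m IH =>
  intro u v hm hu hv
  subst hm
  cases u with
  | of a =>
      rw [circ_of, evalWord_mul, sub_self]
      exact Submodule.zero_mem _
  | mul u₁ u₂ =>
      simp only [FreeMagma.mul_eq] at hu IH ⊢
      by_cases hb : wlt v u₂
      · rw [circ_mul_pos hb]
        have hu₁ : IsGood u₁ := hu.left
        have hu₂ : IsGood u₂ := hu.right
        have hd1 := deg_pos u₁
        have hd2 := deg_pos u₂
        have hdv := deg_pos v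
        have hdvu : deg v ≤ deg u₂ := deg_le_of_wlt hb
        set a := evalWord D.x u₁ with ha
        set b := evalWord D.x u₂ with hbdef
        set c := evalWord D.x v with hc
        have hWgood : IsGood (circ u₁ v * u₂) := by
          rw [← circ_mul_pos hb]
          exact isGood_circ hu hv
        have hWcirc : circ (circ u₁ v) u₂ = circ u₁ v * u₂ := circ_eq_of_isGood_mul hWgood
        -- the IH instances
        have IH1 : a * c - evalWord D.x (circ u₁ v) ∈ below D (circ u₁ v) :=
          IH (u₁ * v) (wlt_of_deg_lt (by simp only [deg_mul]; omega)) u₁ v rfl hu₁ hv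
        have IH2 : b * c - evalWord D.x (circ u₂ v) ∈ below D (circ u₂ v) :=
          IH (u₂ * v) (wlt_of_deg_lt (by simp only [deg_mul]; omega)) u₂ v rfl hu₂ hv
        have IH3 : c * b - evalWord D.x (circ v u₂) ∈ below D (circ v u₂) :=
          IH (v * u₂) (wlt_of_deg_lt (by simp only [deg_mul]; omega)) v u₂ rfl hv hu₂
        -- generic product bound
        have prodW : ∀ z t : FreeMagma (Fin n), IsGood z → IsGood t →
            wlt (z * t) ((u₁ * u₂) * v) → wlt (circ z t) (circ u₁ v * u₂) →
            evalWord D.x z * evalWord D.x t ∈ below D (circ u₁ v * u₂) := by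
          intro z t hz ht hmlt hlt
          have h1 := IH (z * t) hmlt z t rfl hz ht
          have h2 : evalWord D.x (circ z t) ∈ below D (circ u₁ v * u₂) :=
            eval_mem_below D (isGood_circ hz ht) hlt
          have h3 := below_mono D (wle_of_wlt hlt) h1
          have h4 := Submodule.add_mem _ h3 h2
          simpa using h4
        -- Term 1 : (a*c)*b
        have T1 : (a * c) * b - evalWord D.x (circ u₁ v * u₂) ∈ below D (circ u₁ v * u₂) := by
          have e1 : (a * c) * b - evalWord D.x (circ u₁ v * u₂)
              = (a * c - evalWord D.x (circ u₁ v)) * b := by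
            rw [sub_mul, evalWord_mul]
          rw [e1]
          refine Submodule.span_induction
            (p := fun x _ => x * b ∈ below D (circ u₁ v * u₂)) ?_ ?_ ?_ ?_ IH1
          · intro x hx
            obtain ⟨z, hz, rfl⟩ := hx
            rw [D.basis_eq z]
            have hdz : deg z.1 ≤ deg u₁ + deg v := by
              have := deg_le_of_wlt hz
              rw [deg_circ] at this
              exact this
            have hzu : wlt z.1 (u₁ * u₂) := by
              rcases Nat.lt_or_ge (deg z.1) (deg (u₁ * u₂)) with hl | hg
              · exact wlt_of_deg_lt hl
              · have hdeq : deg v = deg u₂ := by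
                  simp only [deg_mul] at hg; omega
                have c1 : wle z.1 (circ u₁ v) := wle_of_wlt hz
                have c2 : wle (circ u₁ v) (u₁ * v) := wle_circ _ _
                have c3 : wlt (u₁ * v) (u₁ * u₂) := wlt_of_deg_right hdeq hb
                exact wlt_of_wle_of_wlt (wle_trans c1 c2) c3
            have cond1 : wlt (z.1 * u₂) ((u₁ * u₂) * v) := by
              rcases Nat.lt_or_ge (deg (z.1 * u₂)) (deg ((u₁ * u₂) * v)) with hl | hg
              · exact wlt_of_deg_lt hl
              · refine wlt_of_deg_left ?_ hzu
                simp only [deg_mul] at hg ⊢; omega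
            have cond2 : wlt (circ z.1 u₂) (circ u₁ v * u₂) := by
              rw [← hWcirc]
              refine circ_mono (deg (circ u₁ v) + deg u₂) (circ u₁ v) u₂ z.1 u₂ le_rfl
                (isGood_circ hu₁ hv) hu₂ z.2 hu₂ (wle_of_wlt hz) (wle_refl _)
                (Or.inl (fun he => wlt_irrefl _ (he ▸ hz)))
            exact prodW z.1 u₂ z.2 hu₂ cond1 cond2
          · show (0 : A) * b ∈ below D (circ u₁ v * u₂)
            rw [zero_mul]; exact Submodule.zero_mem _
          · intro x y hx hy hx' hy'
            show (x + y) * b ∈ below D (circ u₁ v * u₂)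
            rw [add_mul]; exact Submodule.add_mem _ hx' hy'
          · intro t x hx hx'
            show (t • x) * b ∈ below D (circ u₁ v * u₂)
            rw [smul_mul_assoc]; exact Submodule.smul_mem _ _ hx'
        -- left multiplication helper: a * (below D w') ⊆ below W for small w'
        have leftmul : ∀ w' : FreeMagma (Fin n), deg w' ≤ deg u₂ + deg v →
            ∀ r ∈ below D w', a * r ∈ below D (circ u₁ v * u₂) := by
          intro w' hw' r hr
          refine Submodule.span_induction
            (p := fun x _ => a * x ∈ below D (circ u₁ v * u₂)) ?_ ?_ ?_ ?_ hr
          · intro x hx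
            obtain ⟨z, hz, rfl⟩ := hx
            rw [D.basis_eq z]
            have hdz : deg z.1 ≤ deg u₂ + deg v := le_trans (deg_le_of_wlt hz) hw'
            have cond1 : wlt (u₁ * z.1) ((u₁ * u₂) * v) := by
              rcases Nat.lt_or_ge (deg (u₁ * z.1)) (deg ((u₁ * u₂) * v)) with hl | hg
              · exact wlt_of_deg_lt hl
              · refine wlt_of_deg_left ?_ (wlt_of_deg_lt (by simp only [deg_mul]; omega))
                simp only [deg_mul] at hg ⊢; omega
            have cond2 : wlt (circ u₁ z.1) (circ u₁ v * u₂) := by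
              have c1 : wle (circ u₁ z.1) (u₁ * z.1) := wle_circ _ _
              have c2 : wlt (u₁ * z.1) (circ u₁ v * u₂) := by
                rcases Nat.lt_or_ge (deg (u₁ * z.1)) (deg (circ u₁ v * u₂)) with hl | hg
                · exact wlt_of_deg_lt hl
                · refine wlt_of_deg_left ?_ (wlt_of_deg_lt (by rw [deg_circ]; omega))
                  simp only [deg_mul, deg_circ] at hg ⊢; omega
              exact wlt_of_wle_of_wlt c1 c2
            exact prodW u₁ z.1 hu₁ z.2 cond1 cond2
          · show a * (0 : A) ∈ below D (circ u₁ v * u₂)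
            rw [mul_zero]; exact Submodule.zero_mem _
          · intro x y hx hy hx' hy'
            show a * (x + y) ∈ below D (circ u₁ v * u₂)
            rw [mul_add]; exact Submodule.add_mem _ hx' hy'
          · intro t x hx hx'
            show a * (t • x) ∈ below D (circ u₁ v * u₂)
            rw [mul_smul_comm]; exact Submodule.smul_mem _ _ hx'
        -- Term 2 : a*(b*c)
        have T2 : a * (b * c) ∈ below D (circ u₁ v * u₂) := by
          have e2 : a * (b * c) = a * evalWord D.x (circ u₂ v)
              + a * (b * c - evalWord D.x (circ u₂ v)) := by
            rw [← mul_add]; congr 1; abel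
          rw [e2]
          refine Submodule.add_mem _ ?_ ?_
          · have cond1 : wlt (u₁ * circ u₂ v) ((u₁ * u₂) * v) :=
              wlt_of_deg_left (by simp only [deg_mul, deg_circ]; omega)
                (wlt_of_deg_lt (by simp only [deg_mul]; omega))
            have cond2 : wlt (circ u₁ (circ u₂ v)) (circ u₁ v * u₂) := by
              have c1 : wle (circ u₁ (circ u₂ v)) (u₁ * circ u₂ v) := wle_circ _ _
              have c2 : wlt (u₁ * circ u₂ v) (circ u₁ v * u₂) :=
                wlt_of_deg_left (by simp only [deg_mul, deg_circ]; omega)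
                  (wlt_of_deg_lt (by simp only [deg_circ]; omega))
              exact wlt_of_wle_of_wlt c1 c2
            exact prodW u₁ (circ u₂ v) hu₁ (isGood_circ hu₂ hv) cond1 cond2
          · exact leftmul (circ u₂ v) (by rw [deg_circ]) _ IH2
        -- Term 3 : a*(c*b)
        have T3 : a * (c * b) ∈ below D (circ u₁ v * u₂) := by
          have e3 : a * (c * b) = a * evalWord D.x (circ v u₂)
              + a * (c * b - evalWord D.x (circ v u₂)) := by
            rw [← mul_add]; congr 1; abel
          rw [e3]
          refine Submodule.add_mem _ ?_ ?_
          · have cond1 : wlt (u₁ * circ v u₂) ((u₁ * u₂) * v) :=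
              wlt_of_deg_left (by simp only [deg_mul, deg_circ]; omega)
                (wlt_of_deg_lt (by simp only [deg_mul]; omega))
            have cond2 : wlt (circ u₁ (circ v u₂)) (circ u₁ v * u₂) := by
              have c1 : wle (circ u₁ (circ v u₂)) (u₁ * circ v u₂) := wle_circ _ _
              have c2 : wlt (u₁ * circ v u₂) (circ u₁ v * u₂) :=
                wlt_of_deg_left (by simp only [deg_mul, deg_circ]; omega)
                  (wlt_of_deg_lt (by simp only [deg_circ]; omega))
              exact wlt_of_wle_of_wlt c1 c2
            exact prodW u₁ (circ v u₂) hu₁ (isGood_circ hv hu₂) cond1 cond2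
          · exact leftmul (circ v u₂) (by rw [deg_circ]; omega) _ IH3
        -- assemble using the right-symmetric identity
        have hrs := D.rightSymm a b c
        have eval_ab : evalWord D.x (u₁ * u₂) = a * b := rfl
        have id1 : evalWord D.x (u₁ * u₂) * c
            - evalWord D.x (circ u₁ v * u₂)
            = ((a * c) * b - evalWord D.x (circ u₁ v * u₂)) + a * (b * c) - a * (c * b) := by
          rw [eval_ab]
          have h5 : (a * b) * c = (a * c) * b + a * (b * c) - a * (c * b) := by
            have h6 : (a * b) * c - a * (b * c) = (a * c) * b - a * (c * b) := hrs
            calc (a * b) * c = ((a * b) * c - a * (b * c)) + a * (b * c) := by abel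
            _ = ((a * c) * b - a * (c * b)) + a * (b * c) := by rw [h6]
            _ = (a * c) * b + a * (b * c) - a * (c * b) := by abel
          rw [h5]; abel
        rw [id1]
        exact Submodule.sub_mem _ (Submodule.add_mem _ T1 T2) T3
      · rw [circ_mul_neg hb]
        simp only [evalWord_mul, sub_self]
        exact Submodule.zero_mem _

end Algebra

section Lead

variable {k : Type*} [Field k] {n : ℕ} {A : Type*} [NonUnitalNonAssocRing A]
  [Module k A] [SMulCommClass k A A] [IsScalarTower k A A] (D : FreeRSData k n A)

/-- The leading (good) word of a nonzero element. -/
noncomputable def lw (f : A) (hf : f ≠ 0) : {w : FreeMagma (Fin n) // IsGood w} :=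
  (D.basis.repr f).support.max' (by
    rw [Finset.nonempty_iff_ne_empty]
    intro h
    exact hf ((LinearEquiv.map_eq_zero_iff D.basis.repr).1 (Finsupp.support_eq_empty.1 h)))

lemma lw_mem (f : A) (hf : f ≠ 0) : lw D f hf ∈ (D.basis.repr f).support :=
  Finset.max'_mem _ _

lemma lw_coeff_ne (f : A) (hf : f ≠ 0) : D.basis.repr f (lw D f hf) ≠ 0 :=
  Finsupp.mem_support_iff.1 (lw_mem D f hf)

lemma le_lw {f : A} {hf : f ≠ 0} {z : {w : FreeMagma (Fin n) // IsGood w}}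
    (hz : z ∈ (D.basis.repr f).support) : wle z.1 (lw D f hf).1 := by
  have h : z ≤ lw D f hf := Finset.le_max' _ _ hz
  have h2 : z.1 ≤ (lw D f hf).1 := h
  exact h2

lemma lt_lw {f : A} {hf : f ≠ 0} {z : {w : FreeMagma (Fin n) // IsGood w}}
    (hz : z ∈ (D.basis.repr f).support) (hne : z ≠ lw D f hf) : wlt z.1 (lw D f hf).1 := by
  rcases le_lw D hz with h | h
  · exact h
  · exact absurd (Subtype.ext h) hne

lemma lw_decomp (f : A) (hf : f ≠ 0) :
    f - (D.basis.repr f (lw D f hf)) • D.basis (lw D f hf) ∈ below D (lw D f hf).1 := by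
  show _ ∈ Submodule.span k (⇑D.basis '' {z : {w : FreeMagma (Fin n) // IsGood w} |
    wlt z.1 (lw D f hf).1})
  rw [Module.Basis.mem_span_image]
  intro z hz
  simp only [Finset.mem_coe, Finsupp.mem_support_iff, map_sub, map_smul,
    Module.Basis.repr_self, Finsupp.sub_apply, Finsupp.smul_apply] at hz
  by_cases he : z = lw D f hf
  · exfalso
    apply hz
    rw [he, Finsupp.single_eq_same]
    simp
  · refine lt_lw D ?_ he
    rw [Finsupp.single_eq_of_ne he] at hz
    simp only [smul_zero, sub_zero] at hz
    exact Finsupp.mem_support_iff.2 hz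

lemma lead_mul (f g : A) (hf : f ≠ 0) (hg : g ≠ 0) :
    D.basis.repr (f * g) ⟨circ (lw D f hf).1 (lw D g hg).1,
        isGood_circ (lw D f hf).2 (lw D g hg).2⟩
      = D.basis.repr f (lw D f hf) * D.basis.repr g (lw D g hg) ∧
    ∀ z ∈ (D.basis.repr (f * g)).support,
      wle z.1 (circ (lw D f hf).1 (lw D g hg).1) := by
  set wf := lw D f hf with hwf
  set wg := lw D g hg with hwg
  set W : {w : FreeMagma (Fin n) // IsGood w} := ⟨circ wf.1 wg.1, isGood_circ wf.2 wg.2⟩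
    with hWdef
  set cf := D.basis.repr f wf with hcf
  set cg := D.basis.repr g wg with hcg
  have prod_below : ∀ z z' : {w : FreeMagma (Fin n) // IsGood w},
      wle z.1 wf.1 → wle z'.1 wg.1 → (z.1 ≠ wf.1 ∨ z'.1 ≠ wg.1) →
      evalWord D.x z.1 * evalWord D.x z'.1 ∈ below D W.1 := by
    intro z z' h1 h2 hne
    have hk := key D z.1 z'.1 z.2 z'.2
    have hlt : wlt (circ z.1 z'.1) W.1 :=
      circ_mono (deg wf.1 + deg wg.1) wf.1 wg.1 z.1 z'.1 le_rfl wf.2 wg.2 z.2 z'.2 h1 h2 hne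
    have h3 : evalWord D.x (circ z.1 z'.1) ∈ below D W.1 :=
      eval_mem_below D (isGood_circ z.2 z'.2) hlt
    have h4 := below_mono D (wle_of_wlt hlt) hk
    have h5 := Submodule.add_mem _ h4 h3
    simpa using h5
  have Hright : ∀ z : {w : FreeMagma (Fin n) // IsGood w}, wle z.1 wf.1 →
      ∀ r' ∈ below D wg.1, evalWord D.x z.1 * r' ∈ below D W.1 := by
    intro z hzle r' hr'
    refine Submodule.span_induction
      (p := fun x _ => evalWord D.x z.1 * x ∈ below D W.1) ?_ ?_ ?_ ?_ hr'
    · intro x hx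
      obtain ⟨z', hz', rfl⟩ := hx
      rw [D.basis_eq z']
      exact prod_below z z' hzle (wle_of_wlt hz')
        (Or.inr (fun he => wlt_irrefl _ (he ▸ hz')))
    · show evalWord D.x z.1 * (0 : A) ∈ below D W.1
      rw [mul_zero]; exact Submodule.zero_mem _
    · intro x y hx hy hx' hy'
      show evalWord D.x z.1 * (x + y) ∈ below D W.1
      rw [mul_add]; exact Submodule.add_mem _ hx' hy'
    · intro t x hx hx'
      show evalWord D.x z.1 * (t • x) ∈ below D W.1
      rw [mul_smul_comm]; exact Submodule.smul_mem _ _ hx'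
  have Hleft : ∀ r ∈ below D wf.1, r * evalWord D.x wg.1 ∈ below D W.1 := by
    intro r hr
    refine Submodule.span_induction
      (p := fun x _ => x * evalWord D.x wg.1 ∈ below D W.1) ?_ ?_ ?_ ?_ hr
    · intro x hx
      obtain ⟨z, hz, rfl⟩ := hx
      rw [D.basis_eq z]
      exact prod_below z wg (wle_of_wlt hz) (wle_refl _)
        (Or.inl (fun he => wlt_irrefl _ (he ▸ hz)))
    · show (0 : A) * evalWord D.x wg.1 ∈ below D W.1
      rw [zero_mul]; exact Submodule.zero_mem _
    · intro x y hx hy hx' hy'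
      show (x + y) * evalWord D.x wg.1 ∈ below D W.1
      rw [add_mul]; exact Submodule.add_mem _ hx' hy'
    · intro t x hx hx'
      show (t • x) * evalWord D.x wg.1 ∈ below D W.1
      rw [smul_mul_assoc]; exact Submodule.smul_mem _ _ hx'
  have Hboth : ∀ r ∈ below D wf.1, ∀ r' ∈ below D wg.1, r * r' ∈ below D W.1 := by
    intro r hr r' hr'
    refine Submodule.span_induction
      (p := fun x _ => x * r' ∈ below D W.1) ?_ ?_ ?_ ?_ hr
    · intro x hx
      obtain ⟨z, hz, rfl⟩ := hx
      rw [D.basis_eq z]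
      exact Hright z (wle_of_wlt hz) r' hr'
    · show (0 : A) * r' ∈ below D W.1
      rw [zero_mul]; exact Submodule.zero_mem _
    · intro x y hx hy hx' hy'
      show (x + y) * r' ∈ below D W.1
      rw [add_mul]; exact Submodule.add_mem _ hx' hy'
    · intro t x hx hx'
      show (t • x) * r' ∈ below D W.1
      rw [smul_mul_assoc]; exact Submodule.smul_mem _ _ hx'
  -- main membership
  have hF2 : f - cf • D.basis wf ∈ below D wf.1 := lw_decomp D f hf
  have hG2 : g - cg • D.basis wg ∈ below D wg.1 := lw_decomp D g hg
  have hexp : f * g - (cf * cg) • D.basis W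
      = ((cf * cg) • (evalWord D.x wf.1 * evalWord D.x wg.1 - evalWord D.x W.1))
        + (cf • (evalWord D.x wf.1 * (g - cg • D.basis wg)))
        + (cg • ((f - cf • D.basis wf) * evalWord D.x wg.1))
        + ((f - cf • D.basis wf) * (g - cg • D.basis wg)) := by
    rw [D.basis_eq wf, D.basis_eq wg, D.basis_eq W]
    set F := evalWord D.x wf.1
    set G := evalWord D.x wg.1
    set F2 := f - cf • F
    set G2 := g - cg • G
    have hfd : f = cf • F + F2 := by rw [add_comm]; exact (sub_add_cancel f (cf • F)).symm
    have hgd : g = cg • G + G2 := by rw [add_comm]; exact (sub_add_cancel g (cg • G)).symm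
    calc f * g - (cf * cg) • evalWord D.x W.1
        = (cf • F + F2) * (cg • G + G2) - (cf * cg) • evalWord D.x W.1 := by
          rw [← hfd, ← hgd]
      _ = ((cf • F) * (cg • G) + (cf • F) * G2) + (F2 * (cg • G) + F2 * G2)
            - (cf * cg) • evalWord D.x W.1 := by rw [add_mul, mul_add, mul_add]
      _ = ((cf * cg) • (F * G) + cf • (F * G2)) + (cg • (F2 * G) + F2 * G2)
            - (cf * cg) • evalWord D.x W.1 := by
          rw [smul_mul_assoc, smul_mul_assoc, mul_smul_comm, mul_smul_comm, smul_smul]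
      _ = ((cf * cg) • (F * G - evalWord D.x W.1)) + cf • (F * G2) + cg • (F2 * G)
            + F2 * G2 := by rw [smul_sub]; abel
  have hmem : f * g - (cf * cg) • D.basis W ∈ below D W.1 := by
    rw [hexp]
    refine Submodule.add_mem _ (Submodule.add_mem _ (Submodule.add_mem _ ?_ ?_) ?_) ?_
    · exact Submodule.smul_mem _ _ (key D wf.1 wg.1 wf.2 wg.2)
    · exact Submodule.smul_mem _ _ (Hright wf (wle_refl _) _ hG2)
    · exact Submodule.smul_mem _ _ (Hleft _ hF2)
    · exact Hboth _ hF2 _ hG2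
  have hsupp : ↑(D.basis.repr (f * g - (cf * cg) • D.basis W)).support
      ⊆ {z : {w : FreeMagma (Fin n) // IsGood w} | wlt z.1 W.1} :=
    D.basis.mem_span_image.1 hmem
  have hreprd : D.basis.repr (f * g - (cf * cg) • D.basis W)
      = D.basis.repr (f * g) - (cf * cg) • Finsupp.single W 1 := by
    rw [map_sub, map_smul, Module.Basis.repr_self]
  have hWnot : W ∉ (D.basis.repr (f * g - (cf * cg) • D.basis W)).support := by
    intro hWin
    exact wlt_irrefl W.1 (hsupp hWin)
  have hWzero : D.basis.repr (f * g) W - (cf * cg) = 0 := by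
    have := Finsupp.notMem_support_iff.1 hWnot
    rw [hreprd] at this
    simpa using this
  constructor
  · exact sub_eq_zero.1 hWzero
  · intro z hz
    by_cases he : z = W
    · rw [he]; exact wle_refl _
    · have hzd : z ∈ (D.basis.repr (f * g - (cf * cg) • D.basis W)).support := by
        rw [hreprd]
        simp only [Finsupp.mem_support_iff, Finsupp.sub_apply, Finsupp.smul_apply,
          Finsupp.single_eq_of_ne he, smul_zero, sub_zero]
        exact Finsupp.mem_support_iff.1 hz
      exact wle_of_wlt (hsupp hzd)

lemma lw_comm_eq (f g : A) (hf : f ≠ 0) (hg : g ≠ 0) (h : f * g = g * f) :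
    lw D f hf = lw D g hg := by
  obtain ⟨hc1, hb1⟩ := lead_mul D f g hf hg
  obtain ⟨hc2, hb2⟩ := lead_mul D g f hg hf
  set wf := lw D f hf
  set wg := lw D g hg
  have hne1 : D.basis.repr f wf * D.basis.repr g wg ≠ 0 :=
    mul_ne_zero (lw_coeff_ne D f hf) (lw_coeff_ne D g hg)
  have hne2 : D.basis.repr g wg * D.basis.repr f wf ≠ 0 :=
    mul_ne_zero (lw_coeff_ne D g hg) (lw_coeff_ne D f hf)
  have hm1 : (⟨circ wf.1 wg.1, isGood_circ wf.2 wg.2⟩ : {w : FreeMagma (Fin n) // IsGood w})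
      ∈ (D.basis.repr (f * g)).support := by
    rw [Finsupp.mem_support_iff, hc1]; exact hne1
  have hm2 : (⟨circ wg.1 wf.1, isGood_circ wg.2 wf.2⟩ : {w : FreeMagma (Fin n) // IsGood w})
      ∈ (D.basis.repr (g * f)).support := by
    rw [Finsupp.mem_support_iff, hc2]; exact hne2
  have h1 : wle (circ wf.1 wg.1) (circ wg.1 wf.1) := by
    have := hb2 _ (by rw [← h]; exact hm1)
    exact this
  have h2 : wle (circ wg.1 wf.1) (circ wf.1 wg.1) := by
    have := hb1 _ (by rw [h]; exact hm2)
    exact this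
  have hcirc : circ wf.1 wg.1 = circ wg.1 wf.1 := wle_antisymm h1 h2
  exact Subtype.ext (eq_of_circ_comm wf.1 wg.1 wf.2 wg.2 hcirc)

include D in
lemma proportional (f g : A) (hf : f ≠ 0) (hg : g ≠ 0) (h : f * g = g * f) :
    ∃ c : k, g = c • f := by
  have hw := lw_comm_eq D f g hf hg h
  set cf := D.basis.repr f (lw D f hf) with hcf
  set cg := D.basis.repr g (lw D g hg) with hcg
  refine ⟨cg / cf, ?_⟩
  by_contra h0
  have hg' : g - (cg / cf) • f ≠ 0 := sub_ne_zero.2 h0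
  have hcomm' : f * (g - (cg / cf) • f) = (g - (cg / cf) • f) * f := by
    rw [mul_sub, sub_mul, mul_smul_comm, smul_mul_assoc, h]
  have hw' := lw_comm_eq D f (g - (cg / cf) • f) hf hg' hcomm'
  have hne := lw_coeff_ne D (g - (cg / cf) • f) hg'
  apply hne
  rw [← hw']
  rw [map_sub, map_smul]
  have h1 : D.basis.repr g (lw D f hf) = cg := by rw [hw, ← hcg]
  have h2 : D.basis.repr f (lw D f hf) = cf := rfl
  rw [Finsupp.sub_apply, Finsupp.smul_apply, h1, h2]
  rw [smul_eq_mul, div_mul_cancel₀ cg (lw_coeff_ne D f hf), sub_self]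

end Lead



/-- Corollary 2.9: if nonzero elements `f, g` of the free right-symmetric
algebra commute, then `g = c f` for some `c ∈ k`; consequently the centralizer of any
nonzero `f` is the one-dimensional subspace `k f`. -/
theorem statement8 (k : Type*) [Field k] (n : ℕ) (A : Type*) [NonUnitalNonAssocRing A]
    [Module k A] [SMulCommClass k A A] [IsScalarTower k A A]
    (D : FreeRSData k n A) :
    (∀ f g : A, f ≠ 0 → g ≠ 0 → f * g = g * f → ∃ c : k, g = c • f) ∧
    (∀ f : A, f ≠ 0 → {g : A | f * g = g * f} = Set.range fun c : k => c • f) := by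
  constructor
  · intro f g hf hg h
    exact proportional D f g hf hg h
  · intro f hf
    ext g
    simp only [Set.mem_setOf_eq, Set.mem_range]
    constructor
    · intro hcomm
      by_cases hg : g = 0
      · exact ⟨0, by simp [hg]⟩
      · obtain ⟨c, hc⟩ := proportional D f g hf hg hcomm
        exact ⟨c, hc.symm⟩
    · rintro ⟨c, rfl⟩
      rw [mul_smul_comm, smul_mul_assoc]

end RS
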